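/- (Lemma 5.7: lower bound for the boundary L^q norm of û_ε) Let N ≥ 3, 2 ≤ q < 2_*, and θ_N = N − 1 − (N−2)q/2. Let û_ε be as defined in the context, with a fixed admissible cutoff φ. Then there exist l > 0 and ε_0 > 0 such that for all 0 < ε < ε_0: if 2 < q < 2_*, then ∫_{ℝ^{N−1}} e^{|x′|²/4} û_ε(x′,0)^q dx′ ≥ l ε^{θ_N}; if q = 2 and N ≥ 4, then ∫_{ℝ^{N−1}} e^{|x′|²/4} û_ε(x′,0)² dx′ ≥ l ε; if q = 2 and N = 3, then ∫_{ℝ²} e^{|x′|²/4} û_ε(x′,0)² dx′ ≥ l ε|ln ε|. -/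

import Mathlib

open MeasureTheory Real Filter Topology Asymptotics

noncomputable section

/-- The index of the last coordinate of `ℝ^N`. -/
def lastIdx (N : ℕ) (hN : 0 < N) : Fin N := ⟨N - 1, by omega⟩

/-- The open upper half-space `ℝ^N_+ = {x : x_N > 0}`. -/
def upperHalf (N : ℕ) (hN : 0 < N) : Set (EuclideanSpace ℝ (Fin N)) :=
  {x | 0 < x (lastIdx N hN)}

/-- The closed upper half-space `{x : x_N ≥ 0}`. -/
def closedHalf (N : ℕ) (hN : 0 < N) : Set (EuclideanSpace ℝ (Fin N)) :=
  {x | 0 ≤ x (lastIdx N hN)}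

/-- The embedding `ℝ^{N-1} → ℝ^N`, `x' ↦ (x', 0)`. -/
def pad (N : ℕ) (x' : EuclideanSpace ℝ (Fin (N - 1))) : EuclideanSpace ℝ (Fin N) :=
  (EuclideanSpace.equiv (Fin N) ℝ).symm fun i =>
    if h : (i : ℕ) < N - 1 then x' ⟨i, h⟩ else 0

/-- The partial derivative `∂u/∂x_i`. -/
def pderiv' {N : ℕ} (u : EuclideanSpace ℝ (Fin N) → ℝ) (i : Fin N)
    (x : EuclideanSpace ℝ (Fin N)) : ℝ :=
  fderiv ℝ u x (EuclideanSpace.single i 1)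

/-- The Laplacian `Δu = ∑_i ∂²u/∂x_i²`. -/
def lap {N : ℕ} (u : EuclideanSpace ℝ (Fin N) → ℝ) (x : EuclideanSpace ℝ (Fin N)) : ℝ :=
  ∑ i, pderiv' (pderiv' u i) i x

/-- The radial derivative `x · ∇u`. -/
def radDeriv {N : ℕ} (u : EuclideanSpace ℝ (Fin N) → ℝ) (x : EuclideanSpace ℝ (Fin N)) : ℝ :=
  ∑ i, x i * pderiv' u i x

/-- The exponential weight `K(x) = e^{|x|²/4}`. -/
def Kw {N : ℕ} (x : EuclideanSpace ℝ (Fin N)) : ℝ := Real.exp (‖x‖ ^ 2 / 4)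

/-- `|x'|²`, the squared norm of the first `N - 1` coordinates of `x`. -/
def normSq' {N : ℕ} (x : EuclideanSpace ℝ (Fin N)) : ℝ :=
  ∑ i : Fin N, if (i : ℕ) < N - 1 then (x i) ^ 2 else 0

/-- `k_N = (√(N(N-2)))^{(N-2)/2}`. -/
def kN (N : ℕ) : ℝ := Real.sqrt ((N : ℝ) * ((N : ℝ) - 2)) ^ (((N : ℝ) - 2) / 2)

/-- `x_N⁰ = √(N/(N-2))`. -/
def xN0 (N : ℕ) : ℝ := Real.sqrt ((N : ℝ) / ((N : ℝ) - 2))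

/-- The critical Sobolev exponent `2^* = 2N/(N-2)`. -/
def pstar (N : ℕ) : ℝ := 2 * (N : ℝ) / ((N : ℝ) - 2)

/-- The critical trace exponent `2_* = 2(N-1)/(N-2)`. -/
def pstarb (N : ℕ) : ℝ := 2 * ((N : ℝ) - 1) / ((N : ℝ) - 2)

/-- The instanton `U_ε` (denoted `φ_{ε,1}` in the paper). -/
def Ueps (N : ℕ) (hN : 0 < N) (ε : ℝ) (x : EuclideanSpace ℝ (Fin N)) : ℝ :=
  kN N * (ε / (ε ^ 2 + normSq' x + (x (lastIdx N hN) + ε * xN0 N) ^ 2)) ^ (((N : ℝ) - 2) / 2)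

/-- The instanton `Û_ε` for the trace inequality. -/
def Uhat (N : ℕ) (hN : 0 < N) (ε : ℝ) (x : EuclideanSpace ℝ (Fin N)) : ℝ :=
  (ε / (normSq' x + (x (lastIdx N hN) + ε) ^ 2)) ^ (((N : ℝ) - 2) / 2)

/-- A cutoff `φ` is admissible if it is smooth, `[0,1]`-valued, `≡ 1` on `B₁(0) ∩ {x_N ≥ 0}`
and `≡ 0` on `{x_N ≥ 0} \ B₂(0)`. -/
structure AdmissibleCutoff (N : ℕ) (hN : 0 < N) (φ : EuclideanSpace ℝ (Fin N) → ℝ) : Prop where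
  smooth : ContDiff ℝ (⊤ : ℕ∞) φ
  mem01 : ∀ x, φ x ∈ Set.Icc (0 : ℝ) 1
  eq_one : ∀ x ∈ Metric.ball (0 : EuclideanSpace ℝ (Fin N)) 1 ∩ closedHalf N hN, φ x = 1
  eq_zero : ∀ x ∈ closedHalf N hN \ Metric.ball (0 : EuclideanSpace ℝ (Fin N)) 2, φ x = 0

/-- The test function `u_ε = K^{-1/2} φ U_ε`. -/
def ueps (N : ℕ) (hN : 0 < N) (φ : EuclideanSpace ℝ (Fin N) → ℝ) (ε : ℝ)
    (x : EuclideanSpace ℝ (Fin N)) : ℝ :=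
  Real.exp (-‖x‖ ^ 2 / 8) * φ x * Ueps N hN ε x

/-- The test function `û_ε = K^{-1/2} φ Û_ε`. -/
def uhat (N : ℕ) (hN : 0 < N) (φ : EuclideanSpace ℝ (Fin N) → ℝ) (ε : ℝ)
    (x : EuclideanSpace ℝ (Fin N)) : ℝ :=
  Real.exp (-‖x‖ ^ 2 / 8) * φ x * Uhat N hN ε x

/-- The area of the unit sphere in `ℝ^n` (equal to `n` times the volume of the unit ball). -/
def sphereArea (n : ℕ) : ℝ :=
  n * (volume (Metric.ball (0 : EuclideanSpace ℝ (Fin n)) 1)).toReal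

/-- The Beta function `B(a,b) = Γ(a)Γ(b)/Γ(a+b)`. -/
def betaFn (a b : ℝ) : ℝ := Real.Gamma a * Real.Gamma b / Real.Gamma (a + b)

/-- The constant `α_N`. -/
def alphaN (N : ℕ) (hN : 0 < N) : ℝ :=
  ((N : ℝ) - 2) * kN N ^ 2 / 2 *
    ∫ y in upperHalf N hN,
      (normSq' y + y (lastIdx N hN) * (y (lastIdx N hN) + xN0 N)) /
        (1 + normSq' y + (y (lastIdx N hN) + xN0 N) ^ 2) ^ (N - 1)

/-- The constant `β_N`. -/
def betaN (N : ℕ) (hN : 0 < N) : ℝ :=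
  kN N ^ pstar N / (2 * ((N : ℝ) - 2)) *
    ∫ y in upperHalf N hN,
      ‖y‖ ^ 2 / (1 + normSq' y + (y (lastIdx N hN) + xN0 N) ^ 2) ^ N

/-- The constant `γ_N`. -/
def gammaN (N : ℕ) : ℝ :=
  kN N ^ pstarb N / (4 * ((N : ℝ) - 2)) *
    ∫ y' : EuclideanSpace ℝ (Fin (N - 1)),
      ‖y'‖ ^ 2 / (1 + ‖y'‖ ^ 2 + xN0 N ^ 2) ^ (N - 1)

/-- The constant `d_N`. -/
def dN (N : ℕ) (hN : 0 < N) : ℝ :=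
  kN N ^ 2 *
    ∫ y in upperHalf N hN,
      ((1 + normSq' y + (y (lastIdx N hN) + xN0 N) ^ 2) ^ (N - 2))⁻¹

/-- The threshold `λ_N^* = α_N/d_N + (2/2^*)·β_N/d_N + (2/2_*)·γ_N/d_N`. -/
def lamStar (N : ℕ) (hN : 0 < N) : ℝ :=
  alphaN N hN / dN N hN + (2 / pstar N) * betaN N hN / dN N hN
    + (2 / pstarb N) * gammaN N / dN N hN

/-- The threshold `λ̄` of Theorem 1.2 (1). -/
def lamBar (N : ℕ) (hN : 0 < N) : ℝ :=
  if N = 3 then (3 + Real.sqrt 5) / 4 else if N = 4 then 1 else lamStar N hN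

/-- The threshold `λ̂` of Theorem 1.3 (1). -/
def lamHat (N : ℕ) : ℝ :=
  if N = 3 then (3 + Real.sqrt 5) / 4 else (N : ℝ) / 4 + ((N : ℝ) - 4) / 8

/-- The shifted bubble `φ_{ε,τ}`. -/
def phiB (N : ℕ) (hN : 0 < N) (ε τ : ℝ) (x : EuclideanSpace ℝ (Fin N)) : ℝ :=
  kN N * (ε / (ε ^ 2 + normSq' x + (x (lastIdx N hN) + ε * τ * xN0 N) ^ 2))
    ^ (((N : ℝ) - 2) / 2)

/-- The function `ψ(x) = e^{-|x|²/(8√5)}` (dimension 3). -/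
def psi3 (x : EuclideanSpace ℝ (Fin 3)) : ℝ := Real.exp (-‖x‖ ^ 2 / (8 * Real.sqrt 5))

/-- The test function `v_ε = K^{-1/2} ψ U_ε` (dimension 3). -/
def veps (ε : ℝ) (x : EuclideanSpace ℝ (Fin 3)) : ℝ :=
  Real.exp (-‖x‖ ^ 2 / 8) * psi3 x * Ueps 3 (by norm_num) ε x

/-- `K₁ = ∫_{ℝ³₊} |∇U_ε|²` (independent of `ε`). -/
def K1const : ℝ :=
  ∫ x in upperHalf 3 (by norm_num), ‖gradient (Ueps 3 (by norm_num) 1) x‖ ^ 2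

/-- `K₂ = ∫_{ℝ³₊} U_ε⁶` (independent of `ε`). -/
def K2const : ℝ := ∫ x in upperHalf 3 (by norm_num), Ueps 3 (by norm_num) 1 x ^ 6

/-- `K₃ = ∫_{ℝ²} U_ε(x',0)⁴ dx'` (independent of `ε`). -/
def K3const : ℝ :=
  ∫ x' : EuclideanSpace ℝ (Fin 2), Ueps 3 (by norm_num) 1 (pad 3 x') ^ 4

/-- `A_N = ∫_{ℝ^N_+} |∇Û_ε|²` (independent of `ε`). -/
def Ahat (N : ℕ) (hN : 0 < N) : ℝ :=
  ∫ x in upperHalf N hN, ‖gradient (Uhat N hN 1) x‖ ^ 2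

/-- The constant `α̂_N`. -/
def alphaHat (N : ℕ) : ℝ :=
  sphereArea (N - 1) * ((N : ℝ) - 2) / (4 * ((N : ℝ) - 4)) *
    (betaFn (((N : ℝ) + 1) / 2) (((N : ℝ) - 3) / 2)
      + 1 / ((N : ℝ) - 3) * betaFn (((N : ℝ) - 1) / 2) (((N : ℝ) - 1) / 2))

/-- The constant `γ̂_N`. -/
def gammaHat (N : ℕ) : ℝ :=
  sphereArea (N - 1) / (8 * ((N : ℝ) - 2)) * betaFn (((N : ℝ) + 1) / 2) (((N : ℝ) - 3) / 2)

/-- The constant `d̂_N`. -/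
def dHat (N : ℕ) : ℝ :=
  sphereArea (N - 1) / (2 * ((N : ℝ) - 4)) * betaFn (((N : ℝ) - 1) / 2) (((N : ℝ) - 3) / 2)

/-- `T_N = ∫_{ℝ^{N-1}} Û_ε(x',0)^{2_*} dx'` (independent of `ε`;
`T_N = B_N^{2_*/2}` in the paper's notation). -/
def Tconst (N : ℕ) (hN : 0 < N) : ℝ :=
  ∫ x' : EuclideanSpace ℝ (Fin (N - 1)), Uhat N hN 1 (pad N x') ^ pstarb N


lemma pad_apply (N : ℕ) (x' : EuclideanSpace ℝ (Fin (N-1))) (i : Fin N) :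
    pad N x' i = if h : (i : ℕ) < N - 1 then x' ⟨i, h⟩ else 0 := rfl

lemma pad_last (N : ℕ) (hN : 0 < N) (x' : EuclideanSpace ℝ (Fin (N-1))) :
    pad N x' (lastIdx N hN) = 0 := by
  rw [pad_apply]
  simp [lastIdx]

lemma normSq'_pad (N : ℕ) (hN : 0 < N) (x' : EuclideanSpace ℝ (Fin (N-1))) :
    normSq' (pad N x') = ‖x'‖ ^ 2 := by
  have h1 : ‖x'‖ ^ 2 = ∑ j : Fin (N-1), x' j ^ 2 := by
    rw [EuclideanSpace.norm_eq, Real.sq_sqrt (by positivity)]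
    simp [Real.norm_eq_abs, sq_abs]
  rw [h1, normSq']
  have key : ∀ i : Fin N, (if (i : ℕ) < N - 1 then (pad N x' i) ^ 2 else 0)
      = (fun n : ℕ => if h : n < N - 1 then x' ⟨n, h⟩ ^ 2 else 0) (i : ℕ) := by
    intro i
    by_cases h : (i : ℕ) < N - 1 <;> simp [h, pad_apply]
  calc ∑ i : Fin N, (if (i : ℕ) < N - 1 then (pad N x' i) ^ 2 else 0)
      = ∑ n ∈ Finset.range N, (fun n : ℕ => if h : n < N - 1 then x' ⟨n, h⟩ ^ 2 else 0) n := by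
        rw [← Fin.sum_univ_eq_sum_range (fun n : ℕ => if h : n < N - 1 then x' ⟨n, h⟩ ^ 2 else 0) N]
        exact Finset.sum_congr rfl fun i _ => key i
    _ = ∑ n ∈ Finset.range (N-1), (fun n : ℕ => if h : n < N - 1 then x' ⟨n, h⟩ ^ 2 else 0) n := by
        refine (Finset.sum_subset (Finset.range_subset_range.2 (by omega)) fun n _ hn => ?_).symm
        simp only [Finset.mem_range] at hn
        simp [dif_neg (by omega : ¬ n < N - 1)]
    _ = ∑ j : Fin (N-1), x' j ^ 2 := by
        rw [← Fin.sum_univ_eq_sum_range (fun n : ℕ => if h : n < N - 1 then x' ⟨n, h⟩ ^ 2 else 0) (N-1)]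
        exact Finset.sum_congr rfl fun j _ => by simp [dif_pos j.isLt]

lemma norm_pad (N : ℕ) (hN : 0 < N) (x' : EuclideanSpace ℝ (Fin (N-1))) :
    ‖pad N x'‖ = ‖x'‖ := by
  have h2 : ∀ i : Fin N, ‖pad N x' i‖ ^ 2 = if (i : ℕ) < N - 1 then (pad N x' i) ^ 2 else 0 := by
    intro i
    by_cases h : (i : ℕ) < N - 1 <;> simp [h, pad_apply, sq_abs]
  rw [EuclideanSpace.norm_eq]
  simp_rw [Real.norm_eq_abs, sq_abs] at h2 ⊢
  calc Real.sqrt (∑ i : Fin N, pad N x' i ^ 2)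
      = Real.sqrt (∑ i : Fin N, if (i : ℕ) < N - 1 then (pad N x' i) ^ 2 else 0) := by
        congr 1; exact Finset.sum_congr rfl fun i _ => by
          by_cases h : (i : ℕ) < N - 1 <;> simp [h, pad_apply]
    _ = ‖x'‖ := by
        rw [show (∑ i : Fin N, if (i : ℕ) < N - 1 then (pad N x' i) ^ 2 else 0) = normSq' (pad N x') from rfl,
          normSq'_pad N hN, Real.sqrt_sq (norm_nonneg _)]

lemma uhat_pad (N : ℕ) (hN : 0 < N) (φ : EuclideanSpace ℝ (Fin N) → ℝ) (ε : ℝ)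
    (x' : EuclideanSpace ℝ (Fin (N-1))) :
    uhat N hN φ ε (pad N x') = Real.exp (-‖x'‖ ^ 2 / 8) * φ (pad N x') *
      (ε / (‖x'‖ ^ 2 + ε ^ 2)) ^ (((N : ℝ) - 2) / 2) := by
  rw [uhat, Uhat, normSq'_pad N hN, pad_last N hN, norm_pad N hN, zero_add]

lemma continuous_pad (N : ℕ) : Continuous (pad N) := by
  have : Continuous fun (x' : EuclideanSpace ℝ (Fin (N-1))) (i : Fin N) =>
      if h : (i : ℕ) < N - 1 then x' ⟨i, h⟩ else 0 := by
    refine continuous_pi fun i => ?_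
    by_cases h : (i : ℕ) < N - 1
    · simp only [dif_pos h]
      exact (EuclideanSpace.proj (⟨i, h⟩ : Fin (N-1))).continuous
    · simp only [dif_neg h]; exact continuous_const
  exact ((EuclideanSpace.equiv (Fin N) ℝ).symm.toHomeomorph.continuous).comp this

section G
variable (N : ℕ) (hN : 0 < N) (q : ℝ) (φ : EuclideanSpace ℝ (Fin N) → ℝ) (ε : ℝ)

lemma uhat_nonneg (hφ : AdmissibleCutoff N hN φ) (hε : 0 < ε) (x : EuclideanSpace ℝ (Fin N)) :
    0 ≤ uhat N hN φ ε x := by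
  rw [uhat, Uhat]
  have h1 : (0:ℝ) ≤ normSq' x := by
    rw [normSq']
    exact Finset.sum_nonneg fun i _ => by positivity
  have := (hφ.mem01 x).1
  positivity

lemma G_nonneg (hφ : AdmissibleCutoff N hN φ) (hε : 0 < ε)
    (x' : EuclideanSpace ℝ (Fin (N-1))) :
    0 ≤ Real.exp (‖x'‖ ^ 2 / 4) * uhat N hN φ ε (pad N x') ^ q := by
  have := uhat_nonneg N hN φ ε hφ hε (pad N x')
  positivity

lemma G_integrable (hφ : AdmissibleCutoff N hN φ) (hq : 0 < q) (hε : 0 < ε) :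
    Integrable (fun x' : EuclideanSpace ℝ (Fin (N-1)) =>
      Real.exp (‖x'‖ ^ 2 / 4) * uhat N hN φ ε (pad N x') ^ q) := by
  have hcont : Continuous (fun x' : EuclideanSpace ℝ (Fin (N-1)) =>
      Real.exp (‖x'‖ ^ 2 / 4) * uhat N hN φ ε (pad N x') ^ q) := by
    have h1 : Continuous fun x' : EuclideanSpace ℝ (Fin (N-1)) => uhat N hN φ ε (pad N x') := by
      simp only [uhat_pad N hN]
      refine Continuous.mul (Continuous.mul ?_ (hφ.smooth.continuous.comp (continuous_pad N))) ?_
      · exact Real.continuous_exp.comp (by fun_prop)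
      · refine Continuous.rpow_const ?_ fun x => Or.inl ?_
        · fun_prop (disch := intros; positivity)
        · positivity
    refine Continuous.mul (Real.continuous_exp.comp (by fun_prop)) ?_
    exact h1.rpow_const fun x => Or.inr (by positivity)
  refine hcont.integrable_of_hasCompactSupport ?_
  refine HasCompactSupport.intro (isCompact_closedBall (0:EuclideanSpace ℝ (Fin (N-1))) 2) ?_
  intro x' hx'
  have hn : 2 < ‖x'‖ := by
    simpa [Metric.mem_closedBall, dist_zero_right, not_le] using hx'
  have hmem : pad N x' ∈ closedHalf N hN \ Metric.ball 0 2 := by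
    constructor
    · exact le_of_eq (pad_last N hN x').symm
    · simp [Metric.mem_ball, dist_zero_right, norm_pad N hN, not_lt, hn.le]
  rw [uhat_pad N hN, hφ.eq_zero _ hmem]
  rw [mul_zero, zero_mul, Real.zero_rpow hq.ne', mul_zero]

lemma G_lower (hφ : AdmissibleCutoff N hN φ) (hε : 0 < ε) (hq : 2 ≤ q)
    (x' : EuclideanSpace ℝ (Fin (N-1))) (hx : ‖x'‖ < 1) :
    Real.exp (-q/8) * (ε / (‖x'‖ ^ 2 + ε ^ 2)) ^ (((N : ℝ) - 2) / 2 * q)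
      ≤ Real.exp (‖x'‖ ^ 2 / 4) * uhat N hN φ ε (pad N x') ^ q := by
  set a := ‖x'‖ ^ 2 with ha
  have ha0 : 0 ≤ a := sq_nonneg _
  have ha1 : a ≤ 1 := by
    rw [ha]; nlinarith [norm_nonneg x']
  have hφ1 : φ (pad N x') = 1 := by
    refine hφ.eq_one _ ⟨?_, le_of_eq (pad_last N hN x').symm⟩
    simp [Metric.mem_ball, dist_zero_right, norm_pad N hN, hx]
  have hC : 0 ≤ ε / (a + ε ^ 2) := by positivity
  rw [uhat_pad N hN, hφ1, mul_one, Real.mul_rpow (Real.exp_nonneg _) (by positivity),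
    ← Real.exp_mul, ← Real.rpow_mul hC]
  have h1 : Real.exp (-q/8) ≤ Real.exp (a/4) * Real.exp (-a/8*q) := by
    rw [← Real.exp_add]
    exact Real.exp_le_exp.2 (by nlinarith)
  calc Real.exp (-q/8) * (ε / (a + ε ^ 2)) ^ (((N : ℝ) - 2) / 2 * q)
      ≤ (Real.exp (a/4) * Real.exp (-a/8*q)) * (ε / (a + ε ^ 2)) ^ (((N : ℝ) - 2) / 2 * q) := by
        exact mul_le_mul_of_nonneg_right h1 (Real.rpow_nonneg hC _)
    _ = Real.exp (a/4) * (Real.exp (-a/8*q) * (ε / (a + ε ^ 2)) ^ (((N : ℝ) - 2) / 2 * q)) := by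
        ring

end G

lemma caseA (N : ℕ) (hN3 : 3 ≤ N) (q : ℝ) (hq1 : 2 ≤ q)
    (φ : EuclideanSpace ℝ (Fin N) → ℝ) (hφ : AdmissibleCutoff N (Nat.lt_of_lt_of_le (Nat.succ_pos 2) hN3) φ)
    (ε : ℝ) (hε : 0 < ε) (hε1 : ε < 1) :
    (Real.exp (-q/8) * (2:ℝ) ^ (-(((N : ℝ) - 2) / 2 * q)) *
        (volume (Metric.ball (0 : EuclideanSpace ℝ (Fin (N-1))) 1)).toReal)
      * ε ^ ((N : ℝ) - 1 - ((N : ℝ) - 2) * q / 2)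
      ≤ ∫ x' : EuclideanSpace ℝ (Fin (N - 1)),
          Real.exp (‖x'‖ ^ 2 / 4) * uhat N (Nat.lt_of_lt_of_le (Nat.succ_pos 2) hN3) φ ε (pad N x') ^ q := by
  have hN : 0 < N := by omega
  have hN2 : (2:ℝ) ≤ (N:ℝ) := by exact_mod_cast (by omega : 2 ≤ N)
  set m : ℝ := ((N : ℝ) - 2) / 2 * q with hm
  have hm0 : 0 ≤ m := by rw [hm]; have : 0 ≤ (N:ℝ) - 2 := by linarith
                         positivity
  set G : EuclideanSpace ℝ (Fin (N-1)) → ℝ := fun x' =>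
    Real.exp (‖x'‖ ^ 2 / 4) * uhat N hN φ ε (pad N x') ^ q with hG
  have hint : Integrable G := G_integrable N hN q φ ε hφ (by linarith) hε
  have hnn : ∀ x', 0 ≤ G x' := fun x' => G_nonneg N hN q φ ε hφ hε x'
  set s := Metric.ball (0 : EuclideanSpace ℝ (Fin (N-1))) ε with hs
  have step1 : ∫ x' in s, G x' ≤ ∫ x', G x' :=
    setIntegral_le_integral hint (ae_of_all _ hnn)
  have hptw : ∀ x' ∈ s, Real.exp (-q/8) * ((2*ε)⁻¹) ^ m ≤ G x' := by
    intro x' hx'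
    rw [Metric.mem_ball, dist_zero_right] at hx'
    have h1 : Real.exp (-q/8) * (ε / (‖x'‖^2 + ε^2)) ^ m ≤ G x' :=
      G_lower N hN q φ ε hφ hε hq1 x' (lt_trans hx' hε1)
    refine le_trans (mul_le_mul_of_nonneg_left ?_ (Real.exp_nonneg _)) h1
    refine Real.rpow_le_rpow (by positivity) ?_ hm0
    have h2 : ‖x'‖^2 + ε^2 ≤ 2*ε^2 := by nlinarith [norm_nonneg x']
    have h3 : ε / (2*ε^2) ≤ ε / (‖x'‖^2 + ε^2) := by
      gcongr
    refine le_trans (le_of_eq ?_) h3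
    rw [sq, show 2*(ε*ε) = ε*(2*ε) by ring, div_mul_eq_div_div, div_self hε.ne', one_div]
  have step2 : (Real.exp (-q/8) * ((2*ε)⁻¹) ^ m) * (volume s).toReal ≤ ∫ x' in s, G x' :=
    by have := setIntegral_ge_of_const_le_real measurableSet_ball measure_ball_lt_top.ne
         hptw hint.integrableOn
       exact this
  haveI : Nonempty (Fin (N-1)) := ⟨⟨0, by omega⟩⟩
  haveI : Nontrivial (EuclideanSpace ℝ (Fin (N-1))) := by
    refine ⟨0, EuclideanSpace.single ⟨0, by omega⟩ 1, fun h => ?_⟩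
    have := congrArg (fun v : EuclideanSpace ℝ (Fin (N-1)) => v ⟨0, by omega⟩) h
    simp [EuclideanSpace.single_apply] at this
  have hvol : (volume s).toReal
      = ε ^ (N - 1) * (volume (Metric.ball (0 : EuclideanSpace ℝ (Fin (N-1))) 1)).toReal := by
    rw [hs, Measure.addHaar_ball _ _ hε.le, ENNReal.toReal_mul,
      ENNReal.toReal_ofReal (by positivity), finrank_euclideanSpace_fin]
  set v := (volume (Metric.ball (0 : EuclideanSpace ℝ (Fin (N-1))) 1)).toReal with hv
  have e1 : ((2*ε)⁻¹) ^ m = (2:ℝ)^(-m) * ε^(-m) := by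
    rw [Real.inv_rpow (by positivity), Real.mul_rpow (by norm_num) hε.le, mul_inv,
      ← Real.rpow_neg (by norm_num), ← Real.rpow_neg hε.le]
  have e2 : ε ^ (N - 1) = ε ^ ((N:ℝ)-1) := by
    rw [← Real.rpow_natCast ε (N-1), Nat.cast_sub (by omega), Nat.cast_one]
  have e3 : ε ^ (-m) * ε ^ ((N:ℝ)-1) = ε ^ ((N : ℝ) - 1 - ((N : ℝ) - 2) * q / 2) := by
    rw [← Real.rpow_add hε]
    congr 1
    rw [hm]; ring
  calc (Real.exp (-q/8) * (2:ℝ) ^ (-m) * v) * ε ^ ((N : ℝ) - 1 - ((N : ℝ) - 2) * q / 2)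
      = (Real.exp (-q/8) * ((2*ε)⁻¹) ^ m) * (volume s).toReal := by
        rw [hvol, e1, e2, ← e3]; ring
    _ ≤ ∫ x' in s, G x' := step2
    _ ≤ ∫ x', G x' := step1

lemma caseB (φ : EuclideanSpace ℝ (Fin 3) → ℝ) (hφ : AdmissibleCutoff 3 (by norm_num) φ)
    (ε : ℝ) (hε : 0 < ε) (hε1 : ε < 1/4) :
    ((volume (Metric.ball (0 : EuclideanSpace ℝ (Fin (3-1))) 1)).toReal * Real.exp (-1/4) / 2)
      * ε * |Real.log ε|
      ≤ ∫ x' : EuclideanSpace ℝ (Fin (3 - 1)),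
          Real.exp (‖x'‖ ^ 2 / 4) * uhat 3 (by norm_num) φ ε (pad 3 x') ^ (2:ℝ) := by
  have h3 : (0:ℕ) < 3 := by norm_num
  set G : EuclideanSpace ℝ (Fin (3-1)) → ℝ := fun x' =>
    Real.exp (‖x'‖ ^ 2 / 4) * uhat 3 h3 φ ε (pad 3 x') ^ (2:ℝ) with hG
  have hint : Integrable G := G_integrable 3 h3 2 φ ε hφ (by norm_num) hε
  set F : ℝ → ℝ := (Set.Icc ε 2⁻¹).indicator
      (fun r => Real.exp (-1/4) * (ε / (2 * r ^ 2))) with hF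
  have hFle : ∀ x', F ‖x'‖ ≤ G x' := by
    intro x'
    by_cases h : ‖x'‖ ∈ Set.Icc ε 2⁻¹
    · rw [hF, Set.indicator_of_mem h]
      obtain ⟨h1, h2⟩ := h
      have hx1 : ‖x'‖ < 1 := lt_of_le_of_lt h2 (by norm_num)
      have key := G_lower 3 h3 2 φ ε hφ hε le_rfl x' hx1
      have hme : ((3:ℕ):ℝ) - 2 = 1 := by norm_num
      rw [show (((3:ℕ):ℝ) - 2) / 2 * 2 = 1 by rw [hme]; norm_num] at key
      rw [Real.rpow_one] at key
      refine le_trans ?_ key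
      rw [show (-(2:ℝ)/8) = -1/4 by norm_num]
      have hnp : 0 < ‖x'‖ := lt_of_lt_of_le hε h1
      have hd : ‖x'‖ ^ 2 + ε ^ 2 ≤ 2 * ‖x'‖ ^ 2 := by nlinarith
      have : ε / (2 * ‖x'‖ ^ 2) ≤ ε / (‖x'‖ ^ 2 + ε ^ 2) := by gcongr
      exact mul_le_mul_of_nonneg_left this (Real.exp_nonneg _)
    · rw [hF, Set.indicator_of_notMem h]
      exact G_nonneg 3 h3 2 φ ε hφ hε x'
  have hFmeas : Measurable F := by
    refine Measurable.indicator ?_ measurableSet_Icc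
    exact measurable_const.mul ((measurable_const.mul (measurable_id.pow_const 2)).inv.const_mul ε)
  have hFnn : ∀ x' : EuclideanSpace ℝ (Fin (3-1)), 0 ≤ F ‖x'‖ := by
    intro x'
    refine Set.indicator_nonneg (fun r hr => ?_) _
    have : 0 < r := lt_of_lt_of_le hε hr.1
    positivity
  have hfint : Integrable (fun x' : EuclideanSpace ℝ (Fin (3-1)) => F ‖x'‖) := by
    refine hint.mono' ((hFmeas.comp measurable_norm).aestronglyMeasurable) (ae_of_all _ fun x' => ?_)
    rw [Real.norm_eq_abs, abs_of_nonneg (hFnn x')]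
    exact hFle x'
  have hmono : ∫ x' : EuclideanSpace ℝ (Fin (3-1)), F ‖x'‖ ≤ ∫ x' : EuclideanSpace ℝ (Fin (3-1)), G x' := integral_mono hfint hint hFle
  set v := (volume (Metric.ball (0 : EuclideanSpace ℝ (Fin (3-1))) 1)).toReal with hv
  have hv0 : 0 ≤ v := ENNReal.toReal_nonneg
  have hεh : ε ≤ 2⁻¹ := by linarith
  have hIcc : ∫ y in Set.Icc ε 2⁻¹, y⁻¹ = Real.log (2⁻¹/ε) := by
    rw [integral_Icc_eq_integral_Ioc, ← intervalIntegral.integral_of_le hεh]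
    exact integral_inv_of_pos hε (by norm_num)
  have hval : ∫ x' : EuclideanSpace ℝ (Fin (3-1)), F ‖x'‖ = v * Real.exp (-1/4) * ε * Real.log (2⁻¹/ε) := by
    rw [MeasureTheory.integral_fun_norm_addHaar (volume : Measure (EuclideanSpace ℝ (Fin (3-1)))) F]
    rw [finrank_euclideanSpace_fin]
    have e0 : ∀ y : ℝ, y ^ (2-1 : ℕ) • F y
        = (Set.Icc ε 2⁻¹).indicator (fun r => r * (Real.exp (-1/4) * (ε / (2 * r ^ 2)))) y := by
      intro y
      rw [pow_one, smul_eq_mul, hF]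
      by_cases h : y ∈ Set.Icc ε 2⁻¹
      · rw [Set.indicator_of_mem h, Set.indicator_of_mem h]
      · rw [Set.indicator_of_notMem h, Set.indicator_of_notMem h, mul_zero]
    simp_rw [e0]
    rw [setIntegral_indicator measurableSet_Icc]
    have hset : Set.Ioi (0:ℝ) ∩ Set.Icc ε 2⁻¹ = Set.Icc ε 2⁻¹ :=
      Set.inter_eq_right.2 (fun y hy => lt_of_lt_of_le hε hy.1)
    rw [hset]
    rw [setIntegral_congr_fun measurableSet_Icc
      (show Set.EqOn (fun r => r * (Real.exp (-1/4) * (ε / (2 * r ^ 2))))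
        (fun r => (Real.exp (-1/4) * ε / 2) * r⁻¹) (Set.Icc ε 2⁻¹) from fun r hr => by
          have hr0 : 0 < r := lt_of_lt_of_le hε hr.1
          field_simp)]
    rw [integral_const_mul, hIcc, nsmul_eq_mul, smul_eq_mul]
    push_cast
    simp only [Measure.real, hv]
    ring
  have hlog : |Real.log ε| / 2 ≤ Real.log (2⁻¹/ε) := by
    have hlε : Real.log ε < 0 := Real.log_neg hε (by linarith)
    rw [abs_of_neg hlε, Real.log_div (by norm_num) hε.ne', Real.log_inv]
    have h14 : Real.log ε ≤ Real.log (1/4) := Real.log_le_log hε (by linarith)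
    have hl4 : Real.log (1/4) = -(2*Real.log 2) := by
      rw [one_div, Real.log_inv, show (4:ℝ) = 2^2 by norm_num, Real.log_pow]
      push_cast; ring
    have h2 : 0 < Real.log 2 := Real.log_pos (by norm_num)
    linarith
  calc (v * Real.exp (-1/4) / 2) * ε * |Real.log ε|
      = (v * Real.exp (-1/4) * ε) * (|Real.log ε| / 2) := by ring
    _ ≤ (v * Real.exp (-1/4) * ε) * Real.log (2⁻¹/ε) := by
        refine mul_le_mul_of_nonneg_left hlog (by positivity)
    _ = ∫ x' : EuclideanSpace ℝ (Fin (3-1)), F ‖x'‖ := by rw [hval]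
    _ ≤ ∫ x' : EuclideanSpace ℝ (Fin (3-1)), G x' := hmono

/-- **Lemma 5.7: lower bound for the boundary `L^q` norm of `û_ε`.** -/
theorem boundary_Lq_lower_bound_uhat
    (N : ℕ) (hN : 3 ≤ N) (q : ℝ) (hq1 : 2 ≤ q) (hq2 : q < pstarb N)
    (φ : EuclideanSpace ℝ (Fin N) → ℝ) (hφ : AdmissibleCutoff N (by omega) φ) :
    ∃ l > (0 : ℝ), ∃ ε₀ > (0 : ℝ), ∀ ε : ℝ, 0 < ε → ε < ε₀ →
      ((2 < q →
        l * ε ^ ((N : ℝ) - 1 - ((N : ℝ) - 2) * q / 2)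
          ≤ ∫ x' : EuclideanSpace ℝ (Fin (N - 1)),
              Real.exp (‖x'‖ ^ 2 / 4) * uhat N (by omega) φ ε (pad N x') ^ q) ∧
      (q = 2 → 4 ≤ N →
        l * ε
          ≤ ∫ x' : EuclideanSpace ℝ (Fin (N - 1)),
              Real.exp (‖x'‖ ^ 2 / 4) * uhat N (by omega) φ ε (pad N x') ^ q) ∧
      (q = 2 → N = 3 →
        l * ε * |Real.log ε|
          ≤ ∫ x' : EuclideanSpace ℝ (Fin (N - 1)),
              Real.exp (‖x'‖ ^ 2 / 4) * uhat N (by omega) φ ε (pad N x') ^ q)) := by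
  
  set l1 : ℝ := Real.exp (-q/8) * (2:ℝ) ^ (-(((N : ℝ) - 2) / 2 * q)) *
      (volume (Metric.ball (0 : EuclideanSpace ℝ (Fin (N-1))) 1)).toReal with hl1def
  set l3 : ℝ := (volume (Metric.ball (0 : EuclideanSpace ℝ (Fin 2)) 1)).toReal
      * Real.exp (-1/4) / 2 with hl3def
  have hv1 : 0 < (volume (Metric.ball (0 : EuclideanSpace ℝ (Fin (N-1))) 1)).toReal :=
    ENNReal.toReal_pos (Metric.measure_ball_pos volume 0 one_pos).ne' measure_ball_lt_top.ne
  have hv3 : 0 < (volume (Metric.ball (0 : EuclideanSpace ℝ (Fin 2)) 1)).toReal :=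
    ENNReal.toReal_pos (Metric.measure_ball_pos volume 0 one_pos).ne' measure_ball_lt_top.ne
  have hl1 : 0 < l1 := by
    rw [hl1def]
    positivity
  have hl3 : 0 < l3 := by
    rw [hl3def]
    positivity
  refine ⟨min l1 l3, lt_min hl1 hl3, 1/4, by norm_num, fun ε hε hε4 => ⟨?_, ?_, ?_⟩⟩
  · intro _
    refine le_trans ?_ (caseA N hN q hq1 φ hφ ε hε (by linarith))
    exact mul_le_mul_of_nonneg_right (min_le_left _ _) (Real.rpow_nonneg hε.le _)
  · intro hq2' _
    subst hq2'
    have key := caseA N hN 2 le_rfl φ hφ ε hε (by linarith)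
    rw [show (N:ℝ) - 1 - ((N:ℝ)-2)*2/2 = 1 by ring, Real.rpow_one] at key
    refine le_trans ?_ key
    exact mul_le_mul_of_nonneg_right (min_le_left _ _) hε.le
  · intro hq2' hN3'
    subst hN3'
    subst hq2'
    refine le_trans ?_ (caseB φ hφ ε hε hε4)
    have h1 : min l1 l3 ≤ l3 := min_le_right _ _
    have h2 : (0:ℝ) ≤ ε * |Real.log ε| := mul_nonneg hε.le (abs_nonneg _)
    calc min l1 l3 * ε * |Real.log ε| = min l1 l3 * (ε * |Real.log ε|) := by ring
      _ ≤ l3 * (ε * |Real.log ε|) := mul_le_mul_of_nonneg_right h1 h2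
      _ = l3 * ε * |Real.log ε| := by ring
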